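/- Let D = Σ c_{ij} XⁱYʲ ∈ ℂ[[X,Y]] be a nonzero formal power series and let m, n be coprime positive integers. Then for all but finitely many t ∈ ℂ, the intersection multiplicity satisfies i₀(Xⁿ − t·Yᵐ, D) = min{ m·i + n·j : c_{ij} ≠ 0 }; in particular this intersection multiplicity is finite and equals l((m,n), Δ_D), the minimum of the weighted degree m·i + n·j over the Newton diagram of D. -/

import Mathlib

/-- The closed first quadrant `ℝ₊² = [0,∞)²` of `ℝ²`. -/
def firstQuadrant : Set (ℝ × ℝ) := {p | 0 ≤ p.1 ∧ 0 ≤ p.2}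

/-- The Newton diagram of a set `S ⊆ ℝ²`: the convex hull of the union of the
translates `s + ℝ₊²` over `s ∈ S`. -/
noncomputable def newtonDiagram (S : Set (ℝ × ℝ)) : Set (ℝ × ℝ) :=
  convexHull ℝ (⋃ s ∈ S, (fun q => s + q) '' firstQuadrant)

/-- The support of a two-variable formal power series, viewed as a subset of `ℝ²`. -/
def powerSeriesSupport (h : MvPowerSeries (Fin 2) ℂ) : Set (ℝ × ℝ) :=
  {p | ∃ d : Fin 2 →₀ ℕ, MvPowerSeries.coeff (R := ℂ) d h ≠ 0 ∧ p = ((d 0 : ℝ), (d 1 : ℝ))}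

/-- The Newton diagram of a formal power series `h ∈ ℂ[[X,Y]]`. -/
noncomputable def newtonDiagramOf (h : MvPowerSeries (Fin 2) ℂ) : Set (ℝ × ℝ) :=
  newtonDiagram (powerSeriesSupport h)

/-- The intersection multiplicity `i₀(f,g) = dim_ℂ ℂ[[X,Y]]/(f,g)`. -/
noncomputable def interMult (f g : MvPowerSeries (Fin 2) ℂ) : ℕ :=
  Module.finrank ℂ (MvPowerSeries (Fin 2) ℂ ⧸ Ideal.span {f, g})

section AuxDevelopment

open Finset
namespace Stmt10v2
variable (m n : ℕ)

/-- weighted degree -/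
def w (d : Fin 2 →₀ ℕ) : ℕ := m * d 0 + n * d 1

lemma w_add (d e : Fin 2 →₀ ℕ) : w m n (d + e) = w m n d + w m n e := by
  simp [w, Finsupp.add_apply]; ring

noncomputable def Wf (k : ℕ) : Finset (Fin 2 →₀ ℕ) :=
  Finset.filter (fun d => w m n d = k)
    (Finset.Iic (Finsupp.equivFunOnFinite.symm ![k, k]))

lemma mem_Wf (hm : 0 < m) (hn : 0 < n) {k : ℕ} {d : Fin 2 →₀ ℕ} :
    d ∈ Wf m n k ↔ w m n d = k := by
  simp only [Wf, Finset.mem_filter, Finset.mem_Iic, and_iff_right_iff_imp]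
  intro hw
  rw [Finsupp.le_iff]
  intro i _
  unfold w at hw
  have hb : ∀ j : Fin 2, (Finsupp.equivFunOnFinite.symm ![k, k]) j = k := by
    intro j; fin_cases j <;> rfl
  rw [hb]
  have h2 : d i ≤ m * d 0 + n * d 1 := by
    fin_cases i
    · show d 0 ≤ _; nlinarith
    · show d 1 ≤ _; nlinarith
  omega


lemma fin2_ext {d e : Fin 2 →₀ ℕ} (h0 : d 0 = e 0) (h1 : d 1 = e 1) : d = e := by
  ext i; fin_cases i <;> assumption

lemma w_eq_zero (hm : 0 < m) (hn : 0 < n) {d : Fin 2 →₀ ℕ} (h : w m n d = 0) : d = 0 := by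
  unfold w at h
  have h0 : d 0 = 0 := by nlinarith
  have h1 : d 1 = 0 := by nlinarith
  exact fin2_ext h0 h1

lemma Wf_zero (hm : 0 < m) (hn : 0 < n) : Wf m n 0 = {0} := by
  ext d
  rw [mem_Wf m n hm hn, Finset.mem_singleton]
  constructor
  · exact w_eq_zero m n hm hn
  · rintro rfl; simp [w]

variable (α : ℂ)

noncomputable def phiFun (F : MvPowerSeries (Fin 2) ℂ) : PowerSeries ℂ :=
  PowerSeries.mk fun k => ∑ d ∈ Wf m n k, MvPowerSeries.coeff (R := ℂ) d F * α ^ (d 0)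

lemma coeff_phiFun (F : MvPowerSeries (Fin 2) ℂ) (k : ℕ) :
    PowerSeries.coeff (R := ℂ) k (phiFun m n α F) =
      ∑ d ∈ Wf m n k, MvPowerSeries.coeff (R := ℂ) d F * α ^ (d 0) :=
  PowerSeries.coeff_mk _ _

lemma phiFun_C (hm : 0 < m) (hn : 0 < n) (c : ℂ) : phiFun m n α (MvPowerSeries.C (σ := Fin 2) (R := ℂ) c) = PowerSeries.C (R := ℂ) c := by
  ext k
  rw [coeff_phiFun]
  simp only [MvPowerSeries.coeff_C, PowerSeries.coeff_C]
  rcases eq_or_ne k 0 with rfl | hk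
  · rw [Wf_zero m n hm hn, Finset.sum_singleton]
    simp
  · rw [if_neg hk, Finset.sum_eq_zero]
    intro d hd
    rw [mem_Wf m n hm hn] at hd
    have : d ≠ 0 := by rintro rfl; exact hk (by simpa [w] using hd.symm)
    rw [if_neg this, zero_mul]

lemma phiFun_mul (hm : 0 < m) (hn : 0 < n) (F G : MvPowerSeries (Fin 2) ℂ) :
    phiFun m n α (F * G) = phiFun m n α F * phiFun m n α G := by
  ext k
  rw [coeff_phiFun, PowerSeries.coeff_mul]
  simp only [coeff_phiFun, MvPowerSeries.coeff_mul]
  have rhs : ∀ q : ℕ × ℕ,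
      (∑ d ∈ Wf m n q.1, MvPowerSeries.coeff (R := ℂ) d F * α ^ (d 0)) *
        (∑ d ∈ Wf m n q.2, MvPowerSeries.coeff (R := ℂ) d G * α ^ (d 0)) =
      ∑ p ∈ Wf m n q.1 ×ˢ Wf m n q.2,
        MvPowerSeries.coeff (R := ℂ) p.1 F * MvPowerSeries.coeff (R := ℂ) p.2 G * α ^ (p.1 0 + p.2 0) := by
    intro q
    rw [Finset.sum_mul_sum, Finset.sum_product]
    refine Finset.sum_congr rfl fun d1 _ => Finset.sum_congr rfl fun d2 _ => ?_
    rw [pow_add]; ring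
  simp only [rhs]
  have lhs : ∀ d ∈ Wf m n k,
      (∑ p ∈ antidiagonal d, MvPowerSeries.coeff (R := ℂ) p.1 F * MvPowerSeries.coeff (R := ℂ) p.2 G)
          * α ^ (d 0) =
      ∑ p ∈ antidiagonal d,
        MvPowerSeries.coeff (R := ℂ) p.1 F * MvPowerSeries.coeff (R := ℂ) p.2 G * α ^ (p.1 0 + p.2 0) := by
    intro d _
    rw [Finset.sum_mul]
    refine Finset.sum_congr rfl fun p hp => ?_
    rw [Finset.HasAntidiagonal.mem_antidiagonal] at hp
    rw [← hp]; rfl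
  rw [Finset.sum_congr rfl lhs]
  rw [Finset.sum_sigma', Finset.sum_sigma']
  refine Finset.sum_nbij' (fun x => ⟨(w m n x.2.1, w m n x.2.2), x.2⟩)
    (fun x => ⟨x.2.1 + x.2.2, x.2⟩) ?_ ?_ ?_ ?_ ?_
  · rintro ⟨d, p⟩ hx
    rw [Finset.mem_sigma] at hx
    obtain ⟨hd, hp⟩ := hx
    rw [Finset.HasAntidiagonal.mem_antidiagonal] at hp
    rw [mem_Wf m n hm hn] at hd
    rw [Finset.mem_sigma, Finset.HasAntidiagonal.mem_antidiagonal, Finset.mem_product]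
    refine ⟨?_, (mem_Wf m n hm hn).2 rfl, (mem_Wf m n hm hn).2 rfl⟩
    show w m n p.1 + w m n p.2 = k
    rw [← hd, ← hp]
    simp [w, Finsupp.add_apply]; ring
  · rintro ⟨q, p⟩ hx
    rw [Finset.mem_sigma, Finset.HasAntidiagonal.mem_antidiagonal, Finset.mem_product,
      mem_Wf m n hm hn, mem_Wf m n hm hn] at hx
    obtain ⟨hq, h1, h2⟩ := hx
    rw [Finset.mem_sigma, mem_Wf m n hm hn, Finset.HasAntidiagonal.mem_antidiagonal]
    constructor
    · show w m n (p.1 + p.2) = k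
      rw [← hq, ← h1, ← h2]
      simp [w, Finsupp.add_apply]; ring
    · rfl
  · rintro ⟨d, p⟩ hx
    rw [Finset.mem_sigma] at hx
    have hp := hx.2
    rw [Finset.HasAntidiagonal.mem_antidiagonal] at hp
    simp only [hp]
  · rintro ⟨q, p⟩ hx
    rw [Finset.mem_sigma, Finset.HasAntidiagonal.mem_antidiagonal, Finset.mem_product,
      mem_Wf m n hm hn, mem_Wf m n hm hn] at hx
    obtain ⟨hq, h1, h2⟩ := hx
    simp only [h1, h2]
  · rintro ⟨d, p⟩ _
    rfl

end Stmt10v2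

namespace Stmt10v2
noncomputable def phi (m n : ℕ) (hm : 0 < m) (hn : 0 < n) (α : ℂ) :
    MvPowerSeries (Fin 2) ℂ →ₐ[ℂ] PowerSeries ℂ where
  toFun := phiFun m n α
  map_one' := by
    rw [← map_one (MvPowerSeries.C (σ := Fin 2) (R := ℂ)), phiFun_C m n α hm hn, map_one]
  map_mul' := phiFun_mul m n α hm hn
  map_zero' := by
    ext k; simp [coeff_phiFun]
  map_add' := by
    intro F G; ext k
    simp [coeff_phiFun, add_mul, Finset.sum_add_distrib]
  commutes' := by
    intro c
    show phiFun m n α (algebraMap ℂ _ c) = _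
    rw [← MvPowerSeries.c_eq_algebraMap, phiFun_C m n α hm hn]
    rfl

lemma coeff_phi (m n : ℕ) (hm : 0 < m) (hn : 0 < n) (α : ℂ) (F : MvPowerSeries (Fin 2) ℂ)
    (k : ℕ) : PowerSeries.coeff (R := ℂ) k (phi m n hm hn α F) =
      ∑ d ∈ Wf m n k, MvPowerSeries.coeff (R := ℂ) d F * α ^ (d 0) :=
  coeff_phiFun m n α F k

lemma phi_monomial (m n : ℕ) (hm : 0 < m) (hn : 0 < n) (α : ℂ) (e : Fin 2 →₀ ℕ) (c : ℂ) :
    phi m n hm hn α (MvPowerSeries.monomial (R := ℂ) e c) =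
      PowerSeries.monomial (R := ℂ) (w m n e) (c * α ^ (e 0)) := by
  ext k
  rw [coeff_phi, PowerSeries.coeff_monomial]
  rcases eq_or_ne k (w m n e) with rfl | hk
  · rw [Finset.sum_eq_single e]
    · simp [MvPowerSeries.coeff_monomial]
    · intro d _ hd
      rw [MvPowerSeries.coeff_monomial, if_neg (by exact fun h => hd (h ▸ rfl)), zero_mul]
    · intro h
      exact absurd ((mem_Wf m n hm hn).2 rfl) h
  · rw [if_neg hk, Finset.sum_eq_zero]
    intro d hd
    rw [mem_Wf m n hm hn] at hd
    rw [MvPowerSeries.coeff_monomial, if_neg, zero_mul]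
    rintro rfl
    exact hk hd.symm
end Stmt10v2

namespace Stmt10v2
open MvPowerSeries

noncomputable def mk2 (i j : ℕ) : Fin 2 →₀ ℕ := Finsupp.single 0 i + Finsupp.single 1 j

@[simp] lemma mk2_apply0 (i j : ℕ) : mk2 i j 0 = i := by simp [mk2]
@[simp] lemma mk2_apply1 (i j : ℕ) : mk2 i j 1 = j := by
  simp [mk2, Finsupp.single_apply]

lemma mk2_self (d : Fin 2 →₀ ℕ) : mk2 (d 0) (d 1) = d :=
  fin2_ext (by simp) (by simp)

variable (m n : ℕ) (t : ℂ)

/-- coefficient shorthand -/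
noncomputable def cf (F : MvPowerSeries (Fin 2) ℂ) (i j : ℕ) : ℂ :=
  MvPowerSeries.coeff (R := ℂ) (mk2 i j) F

/-- the quotient in division by `f = X^n - t Y^m` -/
noncomputable def Qd (F : MvPowerSeries (Fin 2) ℂ) : MvPowerSeries (Fin 2) ℂ :=
  fun d => ∑ a ∈ Finset.range (d 1 / m + 1), t ^ a * cf F (d 0 + (a + 1) * n) (d 1 - a * m)

/-- the remainder in division by `f = X^n - t Y^m` -/
noncomputable def rd (F : MvPowerSeries (Fin 2) ℂ) : MvPowerSeries (Fin 2) ℂ :=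
  fun d => if d 0 < n then
    ∑ a ∈ Finset.range (d 1 / m + 1), t ^ a * cf F (d 0 + a * n) (d 1 - a * m) else 0

lemma coeff_Qd (F : MvPowerSeries (Fin 2) ℂ) (d : Fin 2 →₀ ℕ) :
    MvPowerSeries.coeff (R := ℂ) d (Qd m n t F) =
      ∑ a ∈ Finset.range (d 1 / m + 1), t ^ a * cf F (d 0 + (a + 1) * n) (d 1 - a * m) :=
  rfl

lemma coeff_rd (F : MvPowerSeries (Fin 2) ℂ) (d : Fin 2 →₀ ℕ) :
    MvPowerSeries.coeff (R := ℂ) d (rd m n t F) = if d 0 < n then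
      ∑ a ∈ Finset.range (d 1 / m + 1), t ^ a * cf F (d 0 + a * n) (d 1 - a * m) else 0 :=
  rfl

lemma telescope (hm : 0 < m) (F : MvPowerSeries (Fin 2) ℂ) (i j : ℕ) :
    ∑ a ∈ Finset.range (j / m + 1), t ^ a * cf F (i + a * n) (j - a * m) =
      cf F i j + (if m ≤ j then
        t * ∑ a ∈ Finset.range ((j - m) / m + 1), t ^ a * cf F ((i + n) + a * n) ((j - m) - a * m)
        else 0) := by
  rw [Finset.sum_range_succ']
  simp only [pow_zero, one_mul, zero_mul, mul_zero, add_zero, Nat.sub_zero]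
  rw [add_comm]
  congr 1
  by_cases hj : m ≤ j
  · rw [if_pos hj, Finset.mul_sum]
    have hdiv : j / m = (j - m) / m + 1 := Nat.div_eq_sub_div hm hj
    rw [hdiv]
    refine Finset.sum_congr rfl fun a _ => ?_
    have e1 : i + (a + 1) * n = i + n + a * n := by ring
    have e2 : j - (a + 1) * m = j - m - a * m := by
      have hh : (a + 1) * m = m + a * m := by ring
      rw [hh, ← Nat.sub_sub]
    rw [e1, e2]; ring
  · rw [if_neg hj]
    have : j / m = 0 := Nat.div_eq_of_lt (by omega)
    rw [this]
    simp
end Stmt10v2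

namespace Stmt10v2
open MvPowerSeries

variable (m n : ℕ) (t : ℂ)

lemma sub_single0_apply (d : Fin 2 →₀ ℕ) :
    ((d - Finsupp.single (0:Fin 2) n) 0 = d 0 - n) ∧ ((d - Finsupp.single (0:Fin 2) n) 1 = d 1) := by
  constructor <;> simp [Finsupp.tsub_apply, Finsupp.single_apply]

lemma sub_single1_apply (d : Fin 2 →₀ ℕ) :
    ((d - Finsupp.single (1:Fin 2) m) 0 = d 0) ∧ ((d - Finsupp.single (1:Fin 2) m) 1 = d 1 - m) := by
  constructor <;> simp [Finsupp.tsub_apply, Finsupp.single_apply]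

lemma division (hm : 0 < m) (F : MvPowerSeries (Fin 2) ℂ) :
    rd m n t F + Qd m n t F *
      ((X 0 : MvPowerSeries (Fin 2) ℂ) ^ n - C (σ := Fin 2) (R := ℂ) t * X 1 ^ m) = F := by
  apply MvPowerSeries.ext
  intro d
  rw [map_add, mul_sub, map_sub, mul_left_comm, coeff_C_mul, X_pow_eq, X_pow_eq,
    coeff_mul_monomial, coeff_mul_monomial, coeff_rd]
  have h0 : Finsupp.single (0 : Fin 2) n ≤ d ↔ n ≤ d 0 := by
    rw [Finsupp.single_le_iff]
  have h1 : Finsupp.single (1 : Fin 2) m ≤ d ↔ m ≤ d 1 := by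
    rw [Finsupp.single_le_iff]
  have key := telescope m n t hm F (d 0) (d 1)
  have hFd : MvPowerSeries.coeff (R := ℂ) d F = cf F (d 0) (d 1) := by
    rw [cf, mk2_self]
  have hA : n ≤ d 0 → MvPowerSeries.coeff (R := ℂ) (d - Finsupp.single (0:Fin 2) n) (Qd m n t F) =
      ∑ a ∈ Finset.range (d 1 / m + 1), t ^ a * cf F (d 0 + a * n) (d 1 - a * m) := by
    intro hi
    rw [coeff_Qd, (sub_single0_apply n d).1, (sub_single0_apply n d).2]
    refine Finset.sum_congr rfl fun a _ => ?_
    have e : d 0 - n + (a + 1) * n = d 0 + a * n := by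
      have : (a + 1) * n = n + a * n := by ring
      omega
    rw [e]
  have hBB : m ≤ d 1 → MvPowerSeries.coeff (R := ℂ) (d - Finsupp.single (1:Fin 2) m) (Qd m n t F) =
      ∑ a ∈ Finset.range ((d 1 - m) / m + 1),
        t ^ a * cf F ((d 0 + n) + a * n) ((d 1 - m) - a * m) := by
    intro hj
    rw [coeff_Qd, (sub_single1_apply m d).1, (sub_single1_apply m d).2]
    refine Finset.sum_congr rfl fun a _ => ?_
    have e : d 0 + (a + 1) * n = d 0 + n + a * n := by ring
    rw [e]
  by_cases hi : n ≤ d 0 <;> by_cases hj : m ≤ d 1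
  · rw [if_pos (h0.2 hi), if_pos (h1.2 hj), if_neg (by omega), hA hi, hBB hj, hFd]
    rw [if_pos hj] at key
    rw [key]; ring
  · rw [if_pos (h0.2 hi), if_neg (fun h => hj (h1.1 h)), if_neg (by omega), hA hi, hFd]
    rw [if_neg hj] at key
    rw [key]; ring
  · rw [if_neg (fun h => hi (h0.1 h)), if_pos (h1.2 hj), if_pos (by omega), hBB hj, hFd]
    rw [if_pos hj] at key
    rw [key]; ring
  · rw [if_neg (fun h => hi (h0.1 h)), if_neg (fun h => hj (h1.1 h)), if_pos (by omega), hFd]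
    rw [if_neg hj] at key
    rw [key]; ring
end Stmt10v2

namespace Stmt10v2
open MvPowerSeries

variable (m n : ℕ) (α : ℂ)

lemma reduced_unique (hn : 0 < n) (hmn : Nat.Coprime m n) {d e : Fin 2 →₀ ℕ}
    (hd : d 0 < n) (he : e 0 < n) (hw : w m n d = w m n e) : d = e := by
  unfold w at hw
  have hmod : (m * d 0) % n = (m * e 0) % n := by
    have l1 : (m * d 0 + n * (d 1)) % n = (m * d 0) % n := by
      rw [mul_comm n (d 1), Nat.add_mul_mod_self_right]
    have l2 : (m * e 0 + n * (e 1)) % n = (m * e 0) % n := by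
      rw [mul_comm n (e 1), Nat.add_mul_mod_self_right]
    rw [← l1, ← l2, hw]
  have hcan : d 0 % n = e 0 % n := by
    exact Nat.ModEq.cancel_left_of_coprime
      (by rwa [Nat.coprime_comm, Nat.Coprime] at hmn) hmod
  have h00 : d 0 = e 0 := by
    rwa [Nat.mod_eq_of_lt hd, Nat.mod_eq_of_lt he] at hcan
  have h11 : d 1 = e 1 := by
    rw [h00] at hw
    have : n * d 1 = n * e 1 := by omega
    exact Nat.eq_of_mul_eq_mul_left hn this
  exact fin2_ext h00 h11

lemma w_single0 : w m n (Finsupp.single (0 : Fin 2) n) = m * n := by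
  simp [w, Finsupp.single_apply]

lemma w_single1 : w m n (Finsupp.single (1 : Fin 2) m) = n * m := by
  simp [w, Finsupp.single_apply]

lemma phi_f (hm : 0 < m) (hn : 0 < n) :
    phi m n hm hn α ((X 0 : MvPowerSeries (Fin 2) ℂ) ^ n -
      C (σ := Fin 2) (R := ℂ) (α ^ n) * X 1 ^ m) = 0 := by
  rw [map_sub, map_mul, X_pow_eq, X_pow_eq, phi_monomial, phi_monomial, w_single0, w_single1]
  have hC : phi m n hm hn α (C (σ := Fin 2) (R := ℂ) (α ^ n)) = PowerSeries.C (R := ℂ) (α ^ n) :=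
    phiFun_C m n α hm hn _
  rw [hC]
  have e1 : (Finsupp.single (0:Fin 2) n) 0 = n := by simp
  have e2 : (Finsupp.single (1:Fin 2) m) 0 = 0 := by simp [Finsupp.single_apply]
  rw [e1, e2]
  ext k
  simp only [map_sub, PowerSeries.coeff_monomial, pow_zero, mul_one, one_mul,
    PowerSeries.coeff_C_mul, mul_comm m n]
  split_ifs <;> simp

lemma mem_ker_phi (hm : 0 < m) (hn : 0 < n) (hmn : Nat.Coprime m n) (hα : α ≠ 0)
    (F : MvPowerSeries (Fin 2) ℂ) (hF : phi m n hm hn α F = 0) :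
    F ∈ Ideal.span {(X 0 : MvPowerSeries (Fin 2) ℂ) ^ n - C (σ := Fin 2) (R := ℂ) (α ^ n) * X 1 ^ m} := by
  set t := α ^ n
  set f := (X 0 : MvPowerSeries (Fin 2) ℂ) ^ n - C (σ := Fin 2) (R := ℂ) t * X 1 ^ m with hf
  have hdiv := division m n t hm F
  have hrd : phi m n hm hn α (rd m n t F) = 0 := by
    have := congrArg (phi m n hm hn α) hdiv
    rw [map_add, map_mul, phi_f m n α hm hn, mul_zero, add_zero, hF] at this
    exact this
  have hrd0 : rd m n t F = 0 := by
    apply MvPowerSeries.ext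
    intro d
    rw [map_zero]
    by_cases hd : d 0 < n
    · have hk : PowerSeries.coeff (R := ℂ) (w m n d) (phi m n hm hn α (rd m n t F)) = 0 := by
        rw [hrd, map_zero]
      rw [coeff_phi, Finset.sum_eq_single d] at hk
      · rcases mul_eq_zero.1 hk with h | h
        · exact h
        · exact absurd h (pow_ne_zero _ hα)
      · intro e he hne
        rw [mem_Wf m n hm hn] at he
        by_cases he0 : e 0 < n
        · exact absurd (reduced_unique m n hn hmn he0 hd he) hne
        · rw [coeff_rd, if_neg he0, zero_mul]
      · intro h
        exact absurd ((mem_Wf m n hm hn).2 rfl) h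
    · rw [coeff_rd, if_neg hd]
  rw [Ideal.mem_span_singleton]
  refine ⟨Qd m n t F, ?_⟩
  conv_lhs => rw [← hdiv, hrd0, zero_add, mul_comm]
end Stmt10v2

namespace Stmt10v2
open MvPowerSeries

variable (m n : ℕ) (α : ℂ)

/-- membership in the numerical semigroup generated by `m, n` (weights). -/
def inS (k : ℕ) : Prop := ∃ i j : ℕ, k = m * i + n * j

lemma inS_iff (k : ℕ) : inS m n k ↔ ∃ d : Fin 2 →₀ ℕ, w m n d = k := by
  constructor
  · rintro ⟨i, j, rfl⟩
    exact ⟨mk2 i j, by simp [w]⟩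
  · rintro ⟨d, rfl⟩
    exact ⟨d 0, d 1, rfl⟩

lemma inS_add {k l : ℕ} (hk : inS m n k) (hl : inS m n l) : inS m n (k + l) := by
  obtain ⟨i, j, rfl⟩ := hk
  obtain ⟨i', j', rfl⟩ := hl
  exact ⟨i + i', j + j', by ring⟩

lemma exists_red (hn : 0 < n) {k : ℕ} (hk : inS m n k) :
    ∃ d : Fin 2 →₀ ℕ, d 0 < n ∧ w m n d = k := by
  obtain ⟨i, j, rfl⟩ := hk
  refine ⟨mk2 (i % n) (j + (i / n) * m), by simp [Nat.mod_lt _ hn], ?_⟩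
  simp only [w, mk2_apply0, mk2_apply1]
  have : i = n * (i / n) + i % n := (Nat.div_add_mod i n).symm.trans (by ring)
  nlinarith [Nat.div_add_mod i n]

lemma large_mem (hm : 0 < m) (hn : 0 < n) (hmn : Nat.Coprime m n) {k : ℕ}
    (hk : m * n ≤ k) : inS m n k := by
  haveI : NeZero n := ⟨hn.ne'⟩
  set u := ZMod.unitOfCoprime m hmn with hu
  set z : ZMod n := ((u⁻¹ : (ZMod n)ˣ) : ZMod n) * (k : ZMod n) with hz
  set i := z.val with hi
  have hin : i < n := ZMod.val_lt z
  have hmi : ((m * i : ℕ) : ZMod n) = (k : ZMod n) := by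
    push_cast
    rw [ZMod.natCast_val, ZMod.cast_id, hz, ← mul_assoc]
    have : (m : ZMod n) = (u : ZMod n) := (ZMod.coe_unitOfCoprime m hmn).symm
    rw [this]
    rw [← Units.val_mul, mul_inv_cancel, Units.val_one, one_mul]
  have hle : m * i ≤ k := le_trans (by nlinarith) hk
  have hdvd : n ∣ k - m * i :=
    (Nat.modEq_iff_dvd' hle).1 ((ZMod.natCast_eq_natCast_iff _ _ _).1 hmi)
  obtain ⟨j, hj⟩ := hdvd
  exact ⟨i, j, by omega⟩

/-- the subspace of power series supported on the semigroup -/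
noncomputable def Amod : Submodule ℂ (PowerSeries ℂ) where
  carrier := {h | ∀ k : ℕ, ¬ inS m n k → PowerSeries.coeff (R := ℂ) k h = 0}
  add_mem' := by
    intro a b ha hb k hk
    rw [map_add, ha k hk, hb k hk, add_zero]
  zero_mem' := by intro k _; rw [map_zero]
  smul_mem' := by
    intro c a ha k hk
    rw [LinearMap.map_smul, ha k hk, smul_zero]

lemma Wf_eq_empty_of_not_inS {k : ℕ} (hm : 0 < m) (hn : 0 < n) (hk : ¬ inS m n k) :
    Wf m n k = ∅ := by
  rw [Finset.eq_empty_iff_forall_notMem]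
  intro d hd
  rw [mem_Wf m n hm hn] at hd
  exact hk ((inS_iff m n k).2 ⟨d, hd⟩)

lemma range_phi_subset (hm : 0 < m) (hn : 0 < n) (F : MvPowerSeries (Fin 2) ℂ) :
    phi m n hm hn α F ∈ Amod m n := by
  intro k hk
  rw [coeff_phi, Wf_eq_empty_of_not_inS m n hm hn hk, Finset.sum_empty]

lemma range_phi (hm : 0 < m) (hn : 0 < n) (hmn : Nat.Coprime m n) (hα : α ≠ 0)
    (h : PowerSeries ℂ) (hh : h ∈ Amod m n) :
    ∃ F : MvPowerSeries (Fin 2) ℂ, phi m n hm hn α F = h := by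
  classical
  refine ⟨(fun d => if d 0 < n then PowerSeries.coeff (R := ℂ) (w m n d) h / α ^ (d 0) else 0 :
    MvPowerSeries (Fin 2) ℂ), ?_⟩
  ext k
  refine (coeff_phi m n hm hn α _ k).trans ?_
  by_cases hk : inS m n k
  · obtain ⟨d₀, hd₀n, hd₀w⟩ := exists_red m n hn hk
    rw [Finset.sum_eq_single d₀]
    · show (if d₀ 0 < n then PowerSeries.coeff (R := ℂ) (w m n d₀) h / α ^ (d₀ 0) else 0) * α ^ (d₀ 0)
        = _
      rw [if_pos hd₀n, hd₀w, div_mul_cancel₀ _ (pow_ne_zero _ hα)]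
    · intro e he hne
      rw [mem_Wf m n hm hn] at he
      show (if e 0 < n then PowerSeries.coeff (R := ℂ) (w m n e) h / α ^ (e 0) else 0) * α ^ (e 0) = 0
      by_cases he0 : e 0 < n
      · exact absurd (reduced_unique m n hn hmn he0 hd₀n (he.trans hd₀w.symm)) hne
      · rw [if_neg he0, zero_mul]
    · intro hcon
      exact absurd ((mem_Wf m n hm hn).2 hd₀w) hcon
  · rw [Wf_eq_empty_of_not_inS m n hm hn hk, Finset.sum_empty, (hh k hk).symm]
end Stmt10v2

namespace Stmt10v2
open MvPowerSeries
open scoped Classical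

variable (m n : ℕ)

/-- the "staircase" index set `S \ (N + S)`, within its bounding window -/
noncomputable def Tset (N : ℕ) : Finset ℕ :=
  (Finset.range (N + m * n)).filter
    (fun k => inS m n k ∧ ¬ (N ≤ k ∧ inS m n (k - N)))

lemma mem_Tset {N k : ℕ} :
    k ∈ Tset m n N ↔ k < N + m * n ∧ inS m n k ∧ ¬ (N ≤ k ∧ inS m n (k - N)) := by
  simp [Tset]

lemma card_Tset (hm : 0 < m) (hn : 0 < n) (hmn : Nat.Coprime m n) {N : ℕ}
    (hN : inS m n N) : (Tset m n N).card = N := by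
  set c := N + m * n with hc
  set A1 := (Finset.range c).filter (fun k => inS m n k) with hA1
  set A2 := (Finset.range c).filter (fun k => N ≤ k ∧ inS m n (k - N)) with hA2
  have hsub : A2 ⊆ A1 := by
    intro k hk
    rw [hA2, Finset.mem_filter] at hk
    obtain ⟨hkr, hkN, hkS⟩ := hk
    rw [hA1, Finset.mem_filter]
    refine ⟨hkr, ?_⟩
    have := inS_add m n hN hkS
    rwa [Nat.add_sub_cancel' hkN] at this
  have hT : Tset m n N = A1 \ A2 := by
    ext k
    rw [mem_Tset, Finset.mem_sdiff, hA1, hA2, Finset.mem_filter, Finset.mem_filter,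
      Finset.mem_range]
    constructor
    · rintro ⟨h1, h2, h3⟩
      exact ⟨⟨h1, h2⟩, fun hcon => h3 hcon.2⟩
    · rintro ⟨⟨h1, h2⟩, h3⟩
      exact ⟨h1, h2, fun hcon => h3 ⟨h1, hcon⟩⟩
  have hA2card : A2.card = ((Finset.range (m * n)).filter (fun j => inS m n j)).card := by
    have himg : A2 = ((Finset.range (m * n)).filter (fun j => inS m n j)).image
        (fun j => N + j) := by
      ext k
      rw [hA2, Finset.mem_filter, Finset.mem_range, Finset.mem_image]
      constructor
      · rintro ⟨h1, h2, h3⟩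
        exact ⟨k - N, by rw [Finset.mem_filter, Finset.mem_range]; exact ⟨by omega, h3⟩,
          by omega⟩
      · rintro ⟨j, hj, rfl⟩
        rw [Finset.mem_filter, Finset.mem_range] at hj
        exact ⟨by omega, by omega, by rw [Nat.add_sub_cancel_left]; exact hj.2⟩
    rw [himg, Finset.card_image_of_injective _ (fun a b hab => by omega)]
  have hA1card : A1.card = ((Finset.range (m * n)).filter (fun j => inS m n j)).card + N := by
    have hsplit : Finset.range c = Finset.range (m * n) ∪ Finset.Ico (m * n) c := by
      rw [Finset.range_eq_Ico, Finset.range_eq_Ico]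
      rw [Finset.Ico_union_Ico_eq_Ico (Nat.zero_le _) (by omega)]
    have hdisj : Disjoint (Finset.range (m * n)) (Finset.Ico (m * n) c) := by
      rw [Finset.disjoint_left]
      intro a ha hb
      rw [Finset.mem_range] at ha
      rw [Finset.mem_Ico] at hb
      omega
    rw [hA1, hsplit, Finset.filter_union,
      Finset.card_union_of_disjoint (Finset.disjoint_filter_filter hdisj)]
    congr 1
    rw [Finset.filter_true_of_mem, Nat.card_Ico]
    · omega
    · intro k hk
      rw [Finset.mem_Ico] at hk
      exact large_mem m n hm hn hmn hk.1
  rw [hT, Finset.card_sdiff_of_subset hsub, hA1card, hA2card, Nat.add_sub_cancel_left]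
end Stmt10v2

namespace Stmt10v2
open MvPowerSeries PowerSeries

variable (m n : ℕ) (hm : 0 < m) (hn : 0 < n) (α : ℂ) (D : MvPowerSeries (Fin 2) ℂ) (N : ℕ)

noncomputable def Wmod : Submodule ℂ (PowerSeries ℂ) :=
  LinearMap.range ((LinearMap.mulLeft ℂ (phi m n hm hn α D)).comp
    (phi m n hm hn α).toLinearMap)

lemma mem_Wmod_iff (x : PowerSeries ℂ) :
    x ∈ Wmod m n hm hn α D ↔ ∃ b, phi m n hm hn α D * phi m n hm hn α b = x := by
  rw [Wmod, LinearMap.mem_range]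
  rfl

noncomputable def Vmod : Submodule ℂ (PowerSeries ℂ) :=
  Submodule.span ℂ (Set.range fun k : (Tset m n N) => (PowerSeries.X : PowerSeries ℂ) ^ (k : ℕ))

lemma X_pow_mem_Amod {k : ℕ} (hk : inS m n k) : ((PowerSeries.X : PowerSeries ℂ) ^ k) ∈ Amod m n := by
  intro l hl
  rw [PowerSeries.coeff_X_pow, if_neg]
  rintro rfl
  exact hl hk

lemma X_pow_mem_range (hmn : Nat.Coprime m n) (hα : α ≠ 0) {k : ℕ} (hk : inS m n k) :
    ∃ F, phi m n hm hn α F = (PowerSeries.X : PowerSeries ℂ) ^ k :=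
  range_phi m n α hm hn hmn hα _ (X_pow_mem_Amod m n hk)

lemma claimA (hmn : Nat.Coprime m n) (hα : α ≠ 0)
    (hglt : ∀ k < N, PowerSeries.coeff (R := ℂ) k (phi m n hm hn α D) = 0)
    (hgN : PowerSeries.coeff (R := ℂ) N (phi m n hm hn α D) ≠ 0) :
    ∀ h ∈ Amod m n, ∃ v ∈ Vmod m n N, h - v ∈ Wmod m n hm hn α D := by
  set g := phi m n hm hn α D with hg
  suffices H : ∀ j : ℕ, ∀ h ∈ Amod m n, (∀ l, l < N + m * n - j → PowerSeries.coeff (R := ℂ) l h = 0) →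
      ∃ v ∈ Vmod m n N, h - v ∈ Wmod m n hm hn α D by
    intro h hh
    exact H (N + m * n) h hh (fun l hl => absurd hl (by omega))
  intro j
  induction j with
  | zero =>
    intro h hh hcond
    simp only [Nat.sub_zero] at hcond
    refine ⟨0, Submodule.zero_mem _, ?_⟩
    rw [sub_zero]
    -- write g = X^N * u with u a unit
    have hdg : (PowerSeries.X : PowerSeries ℂ) ^ N ∣ g := PowerSeries.X_pow_dvd_iff.2 hglt
    obtain ⟨u, hu⟩ := hdg
    have hu0 : PowerSeries.constantCoeff (R := ℂ) u ≠ 0 := by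
      intro h0
      apply hgN
      rw [hg] at hu ⊢
      rw [hu]
      have : PowerSeries.coeff (R := ℂ) N ((PowerSeries.X : PowerSeries ℂ) ^ N * u) =
          PowerSeries.coeff (R := ℂ) 0 u := by
        rw [PowerSeries.coeff_X_pow_mul' u N N, if_pos le_rfl, Nat.sub_self]
      rw [this, PowerSeries.coeff_zero_eq_constantCoeff, h0]
    have hunit : IsUnit u := PowerSeries.isUnit_iff_constantCoeff.2 (isUnit_iff_ne_zero.2 hu0)
    obtain ⟨U, hU⟩ := hunit
    have hdh : (PowerSeries.X : PowerSeries ℂ) ^ (N + m * n) ∣ h :=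
      PowerSeries.X_pow_dvd_iff.2 hcond
    obtain ⟨h₃, hh₃⟩ := hdh
    set b := (↑U⁻¹ : PowerSeries ℂ) * ((PowerSeries.X : PowerSeries ℂ) ^ (m * n) * h₃) with hb
    have hcancel : u * (↑U⁻¹ : PowerSeries ℂ) = 1 := by rw [← hU]; exact U.mul_inv
    have hgb : g * b = h := by
      calc g * b = ((PowerSeries.X : PowerSeries ℂ) ^ N *
            (PowerSeries.X : PowerSeries ℂ) ^ (m * n) * h₃) * (u * (↑U⁻¹ : PowerSeries ℂ)) := by
              rw [hu, hb]; ring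
        _ = h := by rw [hcancel, mul_one, ← pow_add, ← hh₃]
    have hbA : b ∈ Amod m n := by
      intro k hk
      have hklt : k < m * n := by
        by_contra hcon
        exact hk (large_mem m n hm hn hmn (by omega))
      have hdvd : (PowerSeries.X : PowerSeries ℂ) ^ (m * n) ∣ b :=
        ⟨(↑U⁻¹ : PowerSeries ℂ) * h₃, by rw [hb]; ring⟩
      exact PowerSeries.X_pow_dvd_iff.1 hdvd k hklt
    obtain ⟨F, hF⟩ := range_phi m n α hm hn hmn hα b hbA
    exact ⟨F, show g * phi m n hm hn α F = h by rw [hF, hgb]⟩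
  | succ j IH =>
    intro h hh hcond
    by_cases hj : N + m * n ≤ j
    · exact IH h hh (fun l hl => absurd hl (by omega))
    · set l₀ := N + m * n - (j + 1) with hl₀
      by_cases h1 : inS m n l₀
      · by_cases h2 : N ≤ l₀ ∧ inS m n (l₀ - N)
        · -- reduce using a multiple of g
          set s' := l₀ - N with hs'
          obtain ⟨Fs, hFs⟩ := X_pow_mem_range m n hm hn α hmn hα h2.2
          set a := PowerSeries.coeff (R := ℂ) l₀ h with ha
          set gN := PowerSeries.coeff (R := ℂ) N g with hgNdef
          set w₀ := (a / gN) • (g * (PowerSeries.X : PowerSeries ℂ) ^ s') with hw₀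
          have hw₀W : w₀ ∈ Wmod m n hm hn α D :=
            Submodule.smul_mem _ _ ⟨Fs, show g * phi m n hm hn α Fs = _ by rw [hFs]⟩
          have hgXA : g * (PowerSeries.X : PowerSeries ℂ) ^ s' ∈ Amod m n := by
            rw [← hFs, hg, ← map_mul]
            exact range_phi_subset m n α hm hn _
          have hsubA : h - w₀ ∈ Amod m n :=
            Submodule.sub_mem _ hh (Submodule.smul_mem _ _ hgXA)
          have hcoeff : ∀ l, l < N + m * n - j → PowerSeries.coeff (R := ℂ) l (h - w₀) = 0 := by
            intro l hl
            rw [map_sub, hw₀, PowerSeries.coeff_smul, PowerSeries.coeff_mul_X_pow']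
            rcases (by omega : l < l₀ ∨ l = l₀) with hcase | hcase
            · rw [hcond l hcase]
              split_ifs with hsl
              · rw [hglt (l - s') (by omega), smul_zero, sub_zero]
              · rw [smul_zero, sub_zero]
            · subst hcase
              rw [if_pos (by omega : s' ≤ l₀), (by omega : l₀ - s' = N)]
              rw [smul_eq_mul, div_mul_cancel₀ _ hgN, ha, sub_self]
          obtain ⟨v, hv, hvw⟩ := IH (h - w₀) hsubA hcoeff
          refine ⟨v, hv, ?_⟩
          have : h - v = (h - w₀ - v) + w₀ := by ring
          rw [this]
          exact Submodule.add_mem _ hvw hw₀W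
        · -- subtract a basis monomial
          set a := PowerSeries.coeff (R := ℂ) l₀ h with ha
          set v₀ := a • (PowerSeries.X : PowerSeries ℂ) ^ l₀ with hv₀
          have hl₀T : l₀ ∈ Tset m n N := (mem_Tset m n).2 ⟨by omega, h1, h2⟩
          have hv₀V : v₀ ∈ Vmod m n N :=
            Submodule.smul_mem _ _ (Submodule.subset_span ⟨⟨l₀, hl₀T⟩, rfl⟩)
          have hsubA : h - v₀ ∈ Amod m n :=
            Submodule.sub_mem _ hh (Submodule.smul_mem _ _ (X_pow_mem_Amod m n h1))
          have hcoeff : ∀ l, l < N + m * n - j → PowerSeries.coeff (R := ℂ) l (h - v₀) = 0 := by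
            intro l hl
            rw [map_sub, hv₀, PowerSeries.coeff_smul, PowerSeries.coeff_X_pow]
            rcases (by omega : l < l₀ ∨ l = l₀) with hcase | hcase
            · rw [if_neg (by omega), smul_zero, hcond l hcase, sub_zero]
            · subst hcase
              rw [if_pos rfl, smul_eq_mul, mul_one, ha, sub_self]
          obtain ⟨v, hv, hvw⟩ := IH (h - v₀) hsubA hcoeff
          refine ⟨v₀ + v, Submodule.add_mem _ hv₀V hv, ?_⟩
          have : h - (v₀ + v) = (h - v₀) - v := by ring
          rw [this]
          exact hvw
      · exact IH h hh (by
          intro l hl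
          rcases (by omega : l < l₀ ∨ l = l₀) with hcase | hcase
          · exact hcond l hcase
          · subst hcase; exact hh _ h1)
end Stmt10v2

namespace Stmt10v2
open MvPowerSeries PowerSeries

variable (m n : ℕ) (hm : 0 < m) (hn : 0 < n) (α : ℂ) (D : MvPowerSeries (Fin 2) ℂ) (N : ℕ)

lemma claimB (hglt : ∀ k < N, PowerSeries.coeff (R := ℂ) k (phi m n hm hn α D) = 0)
    (hgN : PowerSeries.coeff (R := ℂ) N (phi m n hm hn α D) ≠ 0) :
    Vmod m n N ⊓ Wmod m n hm hn α D = ⊥ := by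
  set g := phi m n hm hn α D with hg
  rw [eq_bot_iff]
  rintro v ⟨hvV, hvW⟩
  rw [Submodule.mem_bot]
  obtain ⟨b, hb⟩ := (mem_Wmod_iff m n hm hn α D v).1 hvW
  set h := phi m n hm hn α b with hh
  by_cases hzero : h = 0
  · rw [← hb, hzero, mul_zero]
  · exfalso
    obtain ⟨cfn, hcfn⟩ := (Submodule.mem_span_range_iff_exists_fun ℂ).1 hvV
    have hcoeffv : ∀ l : ℕ, l ∉ Tset m n N → PowerSeries.coeff (R := ℂ) l v = 0 := by
      intro l hl
      rw [← hcfn, map_sum]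
      refine Finset.sum_eq_zero fun k _ => ?_
      rw [PowerSeries.coeff_smul, PowerSeries.coeff_X_pow, if_neg, smul_zero]
      rintro rfl
      exact hl k.2
    have hfin : h.order < ⊤ := PowerSeries.order_finite_iff_ne_zero.2 hzero
    lift h.order to ℕ using hfin.ne with s hs
    have hsS : inS m n s := by
      by_contra hcon
      have := range_phi_subset m n α hm hn b s hcon
      exact (PowerSeries.order_eq_nat.1 hs.symm).1 this
    have hordv : v.order = ((N + s : ℕ) : ℕ∞) := by
      rw [← hb, PowerSeries.order_mul, ← hs, Nat.cast_add]
      congr 1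
      exact PowerSeries.order_eq_nat.2 ⟨hgN, hglt⟩
    have hNs : PowerSeries.coeff (R := ℂ) (N + s) v ≠ 0 := (PowerSeries.order_eq_nat.1 hordv).1
    apply hNs
    apply hcoeffv
    intro hmem
    obtain ⟨_, _, hcon⟩ := (mem_Tset m n).1 hmem
    exact hcon ⟨by omega, by rwa [Nat.add_sub_cancel_left]⟩

lemma main_dim (hmn : Nat.Coprime m n) (hα : α ≠ 0)
    (hglt : ∀ k < N, PowerSeries.coeff (R := ℂ) k (phi m n hm hn α D) = 0)
    (hgN : PowerSeries.coeff (R := ℂ) N (phi m n hm hn α D) ≠ 0) :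
    FiniteDimensional ℂ (MvPowerSeries (Fin 2) ℂ ⧸
        Ideal.span {(MvPowerSeries.X 0 : MvPowerSeries (Fin 2) ℂ) ^ n -
          MvPowerSeries.C (σ := Fin 2) (R := ℂ) (α ^ n) * MvPowerSeries.X 1 ^ m, D}) ∧
      Module.finrank ℂ (MvPowerSeries (Fin 2) ℂ ⧸
        Ideal.span {(MvPowerSeries.X 0 : MvPowerSeries (Fin 2) ℂ) ^ n -
          MvPowerSeries.C (σ := Fin 2) (R := ℂ) (α ^ n) * MvPowerSeries.X 1 ^ m, D}) = N := by
  set g := phi m n hm hn α D with hg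
  set f := (MvPowerSeries.X 0 : MvPowerSeries (Fin 2) ℂ) ^ n -
    MvPowerSeries.C (σ := Fin 2) (R := ℂ) (α ^ n) * MvPowerSeries.X 1 ^ m with hf
  set I := Ideal.span {f, D} with hI
  set W := Wmod m n hm hn α D with hW
  set V := Vmod m n N with hV
  set Ψ : MvPowerSeries (Fin 2) ℂ →ₗ[ℂ] (PowerSeries ℂ ⧸ W) :=
    W.mkQ.comp (phi m n hm hn α).toLinearMap with hΨ
  have hΨapp : ∀ x, Ψ x = W.mkQ (phi m n hm hn α x) := fun _ => rfl
  have hWmem : ∀ x, x ∈ W ↔ ∃ b, g * phi m n hm hn α b = x :=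
    mem_Wmod_iff m n hm hn α D
  have hker : LinearMap.ker Ψ = I.restrictScalars ℂ := by
    ext x
    rw [LinearMap.mem_ker, hΨapp, Submodule.mkQ_apply, Submodule.Quotient.mk_eq_zero,
      Submodule.restrictScalars_mem]
    constructor
    · intro hx
      obtain ⟨b, hb⟩ := (hWmem _).1 hx
      have hker0 : phi m n hm hn α (x - D * b) = 0 := by
        rw [map_sub, map_mul, ← hg, ← hb, sub_self]
      obtain ⟨q, hq⟩ := Ideal.mem_span_singleton.1
        (mem_ker_phi m n α hm hn hmn hα _ hker0)
      rw [hI, Ideal.mem_span_pair]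
      exact ⟨q, b, by rw [mul_comm q f, mul_comm b D, ← hq]; ring⟩
    · intro hx
      rw [hI, Ideal.mem_span_pair] at hx
      obtain ⟨a, b, hab⟩ := hx
      rw [← hab, map_add, map_mul, map_mul, hf, phi_f m n α hm hn, mul_zero, zero_add]
      exact (hWmem _).2 ⟨b, by rw [mul_comm]⟩
  have hVrange : V ≤ LinearMap.range (phi m n hm hn α).toLinearMap := by
    rw [hV, Vmod, Submodule.span_le]
    rintro x ⟨k, rfl⟩
    obtain ⟨F, hF⟩ := X_pow_mem_range m n hm hn α hmn hα ((mem_Tset m n).1 k.2).2.1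
    exact ⟨F, hF⟩
  have hrange : LinearMap.range Ψ = Submodule.map W.mkQ V := by
    apply le_antisymm
    · rintro y ⟨x, rfl⟩
      obtain ⟨v, hv, hvw⟩ := claimA m n hm hn α D N hmn hα hglt hgN
        (phi m n hm hn α x) (range_phi_subset m n α hm hn x)
      refine ⟨v, hv, ?_⟩
      rw [hΨapp, Submodule.mkQ_apply, Submodule.mkQ_apply, Submodule.Quotient.eq]
      have := Submodule.neg_mem _ hvw
      rwa [neg_sub] at this
    · rintro y ⟨v, hv, rfl⟩
      obtain ⟨F, hF⟩ := hVrange hv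
      exact ⟨F, by rw [hΨapp]; exact congrArg W.mkQ hF⟩
  have hNS : inS m n N := by
    by_contra hcon
    apply hgN
    rw [hg, coeff_phi, Wf_eq_empty_of_not_inS m n hm hn hcon, Finset.sum_empty]
  have li : LinearIndependent ℂ
      (fun k : (Tset m n N) => (PowerSeries.X : PowerSeries ℂ) ^ (k : ℕ)) := by
    rw [Fintype.linearIndependent_iff]
    intro cfn hsum k
    have hc := congrArg (PowerSeries.coeff (R := ℂ) (k : ℕ)) hsum
    rw [map_sum, map_zero, Finset.sum_eq_single k] at hc
    · rwa [PowerSeries.coeff_smul, PowerSeries.coeff_X_pow, if_pos rfl, smul_eq_mul,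
        mul_one] at hc
    · intro i _ hik
      rw [PowerSeries.coeff_smul, PowerSeries.coeff_X_pow, if_neg, smul_zero]
      exact fun hcoe => hik (Subtype.ext (by exact_mod_cast hcoe.symm))
    · intro hk
      exact absurd (Finset.mem_univ k) hk
  have hfinV : FiniteDimensional ℂ V := FiniteDimensional.span_of_finite ℂ (Set.finite_range _)
  have hrankV : Module.finrank ℂ V = N := by
    rw [hV, Vmod, finrank_span_eq_card li, Fintype.card_coe,
      card_Tset m n hm hn hmn hNS]
  have hVW : V ⊓ W = ⊥ := claimB m n hm hn α D N hglt hgN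
  have einj : Function.Injective (W.mkQ ∘ₗ V.subtype) := by
    intro x y hxy
    have hsub : (x : PowerSeries ℂ) - y ∈ W :=
      (Submodule.Quotient.eq W).1 hxy
    have hVsub : (x : PowerSeries ℂ) - y ∈ V := Submodule.sub_mem _ x.2 y.2
    have hz : (x : PowerSeries ℂ) - y = 0 := by
      have hmem := Submodule.mem_inf.2 ⟨hVsub, hsub⟩
      rw [hVW, Submodule.mem_bot] at hmem
      exact hmem
    exact Subtype.ext (by rwa [sub_eq_zero] at hz)
  let e3 : V ≃ₗ[ℂ] (Submodule.map W.mkQ V) :=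
    (LinearEquiv.ofInjective (W.mkQ ∘ₗ V.subtype) einj).trans
      (LinearEquiv.ofEq _ _ (by rw [LinearMap.range_comp, Submodule.range_subtype]))
  let e2 : (MvPowerSeries (Fin 2) ℂ ⧸ Submodule.restrictScalars ℂ I) ≃ₗ[ℂ]
      Submodule.map W.mkQ V :=
    (Submodule.quotEquivOfEq _ _ hker.symm).trans
      ((Ψ.quotKerEquivRange).trans (LinearEquiv.ofEq _ _ hrange))
  let e1 : (MvPowerSeries (Fin 2) ℂ ⧸ I) ≃ₗ[ℂ] V :=
    (((Submodule.Quotient.restrictScalarsEquiv ℂ I).symm.trans e2).trans e3.symm)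
  constructor
  · exact Module.Finite.equiv e1.symm
  · rw [e1.finrank_eq, hrankV]
end Stmt10v2


end AuxDevelopment




section AuxDevelopment2
namespace Stmt10v2

variable (m n : ℕ)

lemma newton_sInf (m n : ℕ) (hm : 0 < m) (hn : 0 < n) (D : MvPowerSeries (Fin 2) ℂ)
    (hD : D ≠ 0) :
    ((sInf {k : ℕ | ∃ d : Fin 2 →₀ ℕ, MvPowerSeries.coeff (R := ℂ) d D ≠ 0 ∧
        k = m * d 0 + n * d 1} : ℕ) : ℝ) =
      sInf ((fun p : ℝ × ℝ => m * p.1 + n * p.2) '' newtonDiagramOf D) := by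
  set K := {k : ℕ | ∃ d : Fin 2 →₀ ℕ, MvPowerSeries.coeff (R := ℂ) d D ≠ 0 ∧
    k = m * d 0 + n * d 1} with hK
  have hKne : K.Nonempty := by
    have : ∃ d : Fin 2 →₀ ℕ, MvPowerSeries.coeff (R := ℂ) d D ≠ 0 := by
      by_contra hcon
      push_neg at hcon
      exact hD (MvPowerSeries.ext fun d => by rw [hcon d, map_zero])
    obtain ⟨d, hd⟩ := this
    exact ⟨m * d 0 + n * d 1, d, hd, rfl⟩
  set N := sInf K with hN
  obtain ⟨d₀, hd₀, hd₀w⟩ : N ∈ K := Nat.sInf_mem hKne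
  set φl : ℝ × ℝ → ℝ := fun p => m * p.1 + n * p.2 with hφl
  have hlin : IsLinearMap ℝ φl := by
    constructor
    · intro p q
      simp only [hφl, Prod.fst_add, Prod.snd_add]
      ring
    · intro c p
      simp only [hφl, Prod.smul_fst, Prod.smul_snd, smul_eq_mul]
      ring
  have hlb : ∀ x ∈ newtonDiagramOf D, (N : ℝ) ≤ φl x := by
    intro x hx
    have hsub : newtonDiagramOf D ⊆ {p : ℝ × ℝ | (N : ℝ) ≤ φl p} := by
      rw [newtonDiagramOf, newtonDiagram]
      apply convexHull_min _ (convex_halfSpace_ge hlin _)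
      rintro p hp
      simp only [Set.mem_iUnion] at hp
      obtain ⟨s, hs, q, hq, rfl⟩ := hp
      obtain ⟨d, hd, rfl⟩ := hs
      have h1 : (N : ℝ) ≤ m * (d 0 : ℝ) + n * (d 1 : ℝ) := by
        have : N ≤ m * d 0 + n * d 1 := Nat.sInf_le ⟨d, hd, rfl⟩
        push_cast
        exact_mod_cast this
      have h2 : (0 : ℝ) ≤ m * q.1 + n * q.2 := by
        have := hq.1; have := hq.2
        positivity
      show (N : ℝ) ≤ m * ((d 0 : ℝ) + q.1) + n * ((d 1 : ℝ) + q.2)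
      nlinarith
    exact hsub hx
  have hmem : (N : ℝ) ∈ (φl '' newtonDiagramOf D) := by
    refine ⟨((d₀ 0 : ℝ), (d₀ 1 : ℝ)), ?_, ?_⟩
    · rw [newtonDiagramOf, newtonDiagram]
      apply subset_convexHull
      simp only [Set.mem_iUnion]
      refine ⟨((d₀ 0 : ℝ), (d₀ 1 : ℝ)), ⟨d₀, hd₀, rfl⟩, (0, 0), ⟨le_refl _, le_refl _⟩, ?_⟩
      simp
    · simp only [hφl]
      rw [hd₀w]
      push_cast
      ring
  refine le_antisymm ?_ ?_
  · exact le_csInf ⟨_, hmem⟩ (by rintro x ⟨p, hp, rfl⟩; exact hlb p hp)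
  · exact csInf_le ⟨(N : ℝ), by rintro x ⟨p, hp, rfl⟩; exact hlb p hp⟩ hmem

end Stmt10v2

namespace Stmt10v2

noncomputable def Pg (m n : ℕ) (D : MvPowerSeries (Fin 2) ℂ) (N : ℕ) : Polynomial ℂ :=
  ∑ d ∈ Wf m n N, Polynomial.C (MvPowerSeries.coeff (R := ℂ) d D) * Polynomial.X ^ (d 0)

lemma eq_of_w_eq (m n : ℕ) (hn : 0 < n) {d e : Fin 2 →₀ ℕ} (h0 : d 0 = e 0)
    (hw : w m n d = w m n e) : d = e := by
  unfold w at hw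
  refine fin2_ext h0 ?_
  rw [h0] at hw
  have : n * d 1 = n * e 1 := by omega
  exact Nat.eq_of_mul_eq_mul_left hn this

lemma Pg_ne_zero (m n : ℕ) (hm : 0 < m) (hn : 0 < n) (D : MvPowerSeries (Fin 2) ℂ)
    (N : ℕ) {d₀ : Fin 2 →₀ ℕ} (hd₀ : MvPowerSeries.coeff (R := ℂ) d₀ D ≠ 0)
    (hw : w m n d₀ = N) : Pg m n D N ≠ 0 := by
  intro h0
  apply hd₀
  have hc := congrArg (fun p => Polynomial.coeff p (d₀ 0)) h0
  simp only [Polynomial.coeff_zero] at hc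
  rw [Pg, Polynomial.finset_sum_coeff] at hc
  rw [Finset.sum_eq_single d₀] at hc
  · rwa [Polynomial.coeff_C_mul, Polynomial.coeff_X_pow, if_pos rfl, mul_one] at hc
  · intro d hd hne
    rw [mem_Wf m n hm hn] at hd
    rw [Polynomial.coeff_C_mul, Polynomial.coeff_X_pow, if_neg, mul_zero]
    intro he
    exact hne (eq_of_w_eq m n hn he.symm (by rw [hd, hw]))
  · intro hcon
    exact absurd ((mem_Wf m n hm hn).2 hw) hcon

lemma eval_Pg (m n : ℕ) (hm : 0 < m) (hn : 0 < n) (α : ℂ) (D : MvPowerSeries (Fin 2) ℂ)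
    (N : ℕ) : Polynomial.eval α (Pg m n D N) =
      PowerSeries.coeff (R := ℂ) N (phi m n hm hn α D) := by
  rw [coeff_phi, Pg, Polynomial.eval_finset_sum]
  refine Finset.sum_congr rfl fun d _ => ?_
  simp

end Stmt10v2


end AuxDevelopment2

/-- Let `D ∈ ℂ[[X,Y]]` be nonzero and `m, n` coprime positive
integers.  For all but finitely many `t ∈ ℂ`, the intersection multiplicity
`i₀(Xⁿ − t·Yᵐ, D)` equals `min{ m·i + n·j : c_{ij} ≠ 0 }` (with the quotient ring
finite-dimensional over `ℂ`), and this minimum equals `l((m,n), Δ_D)`, the infimum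
of the weighted degree `m·i + n·j` over the Newton diagram of `D`. -/
theorem interMult_generic_eq_min (D : MvPowerSeries (Fin 2) ℂ) (hD : D ≠ 0)
    (m n : ℕ) (hm : 0 < m) (hn : 0 < n) (hmn : Nat.Coprime m n) :
    {t : ℂ | ¬ (FiniteDimensional ℂ (MvPowerSeries (Fin 2) ℂ ⧸
          Ideal.span {(MvPowerSeries.X 0 : MvPowerSeries (Fin 2) ℂ) ^ n -
            MvPowerSeries.C (σ := Fin 2) (R := ℂ) t * MvPowerSeries.X 1 ^ m, D}) ∧
        interMult ((MvPowerSeries.X 0 : MvPowerSeries (Fin 2) ℂ) ^ n -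
            MvPowerSeries.C (σ := Fin 2) (R := ℂ) t * MvPowerSeries.X 1 ^ m) D =
          sInf {k : ℕ | ∃ d : Fin 2 →₀ ℕ, MvPowerSeries.coeff (R := ℂ) d D ≠ 0 ∧
            k = m * d 0 + n * d 1})}.Finite ∧
    ((sInf {k : ℕ | ∃ d : Fin 2 →₀ ℕ, MvPowerSeries.coeff (R := ℂ) d D ≠ 0 ∧
        k = m * d 0 + n * d 1} : ℕ) : ℝ) =
      sInf ((fun p : ℝ × ℝ => m * p.1 + n * p.2) '' newtonDiagramOf D) := by
  constructor
  · set K := {k : ℕ | ∃ d : Fin 2 →₀ ℕ, MvPowerSeries.coeff (R := ℂ) d D ≠ 0 ∧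
      k = m * d 0 + n * d 1} with hK
    have hKne : K.Nonempty := by
      have : ∃ d : Fin 2 →₀ ℕ, MvPowerSeries.coeff (R := ℂ) d D ≠ 0 := by
        by_contra hcon
        push_neg at hcon
        exact hD (MvPowerSeries.ext fun d => by rw [hcon d, map_zero])
      obtain ⟨d, hd⟩ := this
      exact ⟨m * d 0 + n * d 1, d, hd, rfl⟩
    set N := sInf K with hN
    obtain ⟨d₀, hd₀, hd₀w⟩ : N ∈ K := Nat.sInf_mem hKne
    have hP : Stmt10v2.Pg m n D N ≠ 0 :=
      Stmt10v2.Pg_ne_zero m n hm hn D N hd₀ hd₀w.symm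
    apply Set.Finite.subset
      ((((Polynomial.finite_setOf_isRoot hP).union (Set.finite_singleton 0)).image
        (fun α : ℂ => α ^ n)))
    intro t ht
    simp only [Set.mem_setOf_eq] at ht
    by_contra htim
    apply ht
    obtain ⟨α, hαn⟩ := IsAlgClosed.exists_pow_nat_eq t hn
    have hαok : α ∉ ({x : ℂ | (Stmt10v2.Pg m n D N).IsRoot x} ∪ {0} : Set ℂ) :=
      fun hmem => htim ⟨α, hmem, hαn⟩
    rw [Set.mem_union, Set.mem_singleton_iff] at hαok
    push_neg at hαok
    have hα0 : α ≠ 0 := hαok.2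
    have hgN : PowerSeries.coeff (R := ℂ) N (Stmt10v2.phi m n hm hn α D) ≠ 0 := by
      rw [← Stmt10v2.eval_Pg m n hm hn α D N]
      exact hαok.1
    have hglt : ∀ k < N, PowerSeries.coeff (R := ℂ) k (Stmt10v2.phi m n hm hn α D) = 0 := by
      intro k hk
      rw [Stmt10v2.coeff_phi, Finset.sum_eq_zero]
      intro d hd
      rw [Stmt10v2.mem_Wf m n hm hn] at hd
      have hzero : MvPowerSeries.coeff (R := ℂ) d D = 0 := by
        by_contra hc
        have hkK : k ∈ K := ⟨d, hc, hd.symm⟩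
        exact absurd (Nat.sInf_le hkK) (by omega)
      rw [hzero, zero_mul]
    have hmain := Stmt10v2.main_dim m n hm hn α D N hmn hα0 hglt hgN
    rw [hαn] at hmain
    exact ⟨hmain.1, hmain.2⟩
  · exact Stmt10v2.newton_sInf m n hm hn D hD
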